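/- Let L be a real Lie algebra, 𝒜 an affine representation of L modeled on a real vector space A, and (W, σ) a representation of L. For a polynomial p : 𝒜 → W of degree ≤ k with components (p_i) relative to a fixed a₀ ∈ 𝒜 and for x ∈ L, let x·p denote the polynomial of degree ≤ k whose components relative to a₀ are (x·p)_i(u₁,…,u_i) = σ(x)(p_i(u₁,…,u_i)) − Σ_{j=1}^i p_i(u₁,…,x⃗(u_j),…,u_i) − p_{i+1}(x·a₀, u₁,…,u_i) (with p_{k+1} = 0). Then this operation is a representation of L on the space of polynomials of degree ≤ k: for all x, y ∈ L and all such p, x·(y·p) − y·(x·p) = [x,y]·p as functions from 𝒜 to W. -/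
import Mathlib


/-- Components of the polynomial `x·p` built from components `p` relative to a base point:
`(x·p)_i(u₁,…,u_i) = σx(p_i(u₁,…,u_i)) − Σ_j p_i(u₁,…,linx(u_j),…,u_i) − p_{i+1}(c,u₁,…,u_i)`,
where `c = x·a₀`. -/
def actedPolyComp {A W : Type*} [AddCommGroup A] [Module ℝ A] [AddCommGroup W] [Module ℝ W]
    (σx : W →ₗ[ℝ] W) (linx : A →ₗ[ℝ] A) (c : A)
    (p : ∀ i : ℕ, (Fin i → A) → W) : ∀ i : ℕ, (Fin i → A) → W :=
  fun i u =>
    σx (p i u) - (∑ j : Fin i, p i (Function.update u j (linx (u j)))) - p (i + 1) (Fin.cons c u)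

/-- The polynomial on the affine space `𝒜` with components `p` (relative to `a₀`) up to
degree `k`: `a ↦ Σ_{i≤k} (1/i!) p_i(a −ᵥ a₀, …, a −ᵥ a₀)`. -/
noncomputable def polyFromComp {A W 𝒜 : Type*} [AddCommGroup A] [Module ℝ A]
    [AddCommGroup W] [Module ℝ W] [AddTorsor A 𝒜]
    (a₀ : 𝒜) (k : ℕ) (p : ∀ i : ℕ, (Fin i → A) → W) : 𝒜 → W :=
  fun a => ∑ i ∈ Finset.range (k + 1), (i.factorial : ℝ)⁻¹ • p i (fun _ => a -ᵥ a₀)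

section
open Function
set_option linter.unusedSectionVars false
variable {A W : Type*} [AddCommGroup A] [Module ℝ A] [AddCommGroup W] [Module ℝ W]

lemma double_sum_key {i : ℕ} (f : MultilinearMap ℝ (fun _ : Fin i => A) W)
    (Lx Ly : A →ₗ[ℝ] A) (u : Fin i → A) :
    (∑ j : Fin i, ∑ m : Fin i,
        f (update (update u j (Lx (u j))) m (Ly (update u j (Lx (u j)) m))))
      - (∑ j : Fin i, ∑ m : Fin i,
          f (update (update u j (Ly (u j))) m (Lx (update u j (Ly (u j)) m))))
      = (∑ j : Fin i, f (update u j (Ly (Lx (u j)))))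
        - ∑ j : Fin i, f (update u j (Lx (Ly (u j)))) := by
  rw [Finset.sum_comm (f := fun j m =>
    f (update (update u j (Ly (u j))) m (Lx (update u j (Ly (u j)) m))))]
  rw [← Finset.sum_sub_distrib, ← Finset.sum_sub_distrib]
  apply Finset.sum_congr rfl
  intro j _
  rw [← Finset.sum_sub_distrib]
  rw [Finset.sum_eq_single j]
  · simp [update_self, update_idem]
  · intro m _ hm
    rw [update_of_ne hm, update_of_ne (Ne.symm hm),
      update_comm hm (Ly (u m)) (Lx (u j)) u]
    simp
  · simp

lemma sum_cons_update {i : ℕ} (f : (Fin (i+1) → A) → W) (L : A → A) (c : A) (u : Fin i → A) :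
    ∑ m : Fin (i+1), f (update (Fin.cons c u : Fin (i+1) → A) m (L ((Fin.cons c u : Fin (i+1) → A) m)))
      = f (Fin.cons (L c) u) + ∑ j : Fin i, f (Fin.cons c (update u j (L (u j)))) := by
  rw [Fin.sum_univ_succ]
  simp [Fin.update_cons_zero, Fin.cons_succ, ← Fin.cons_update]

lemma pcons_sub {i : ℕ} (f : MultilinearMap ℝ (fun _ : Fin (i+1) => A) W) (a b : A)
    (u : Fin i → A) : f (Fin.cons (a - b) u) = f (Fin.cons a u) - f (Fin.cons b u) := by
  have h0 : (Fin.cons (a - b) u : Fin (i+1) → A)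
      = update (Fin.cons a u : Fin (i+1) → A) 0 (a - b) :=
    (Fin.update_cons_zero (α := fun _ : Fin (i+1) => A) a u (a - b)).symm
  rw [h0, f.map_update_sub, Fin.update_cons_zero, Fin.update_cons_zero]

lemma swap01 {i : ℕ} (f : MultilinearMap ℝ (fun _ : Fin (i+2) => A) W)
    (hsym : ∀ (e : Equiv.Perm (Fin (i+2))) (u : Fin (i+2) → A), f (fun t => u (e t)) = f u)
    (a b : A) (u : Fin i → A) :
    f (Fin.cons a (Fin.cons b u)) = f (Fin.cons b (Fin.cons a u)) := by
  have := hsym (Equiv.swap 0 1) (Fin.cons b (Fin.cons a u))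
  rw [← this]
  congr 1
  funext t
  refine Fin.cases ?_ (fun s => ?_) t
  · simp [Equiv.swap_apply_left]
  · refine Fin.cases ?_ (fun s' => ?_) s
    · have h1 : (Fin.succ 0 : Fin (i+2)) = 1 := rfl
      simp [h1, Equiv.swap_apply_right]
    · have h0 : (s'.succ.succ : Fin (i+2)) ≠ 0 := Fin.succ_ne_zero _
      have h1 : (s'.succ.succ : Fin (i+2)) ≠ 1 := by
        simp [Fin.ext_iff, Fin.val_succ]
      rw [Equiv.swap_apply_of_ne_of_ne h0 h1]
      simp [Fin.cons_succ]

lemma comp_key (σx σy σb : W →ₗ[ℝ] W) (Lx Ly Lb : A →ₗ[ℝ] A) (cx cy cb : A)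
    (hσ : ∀ w, σb w = σx (σy w) - σy (σx w))
    (hL : ∀ v, Lb v = Lx (Ly v) - Ly (Lx v))
    (hc : cb = Lx cy - Ly cx)
    (pC : ∀ i : ℕ, MultilinearMap ℝ (fun _ : Fin i => A) W)
    (hpsym : ∀ (i : ℕ) (e : Equiv.Perm (Fin i)) (u : Fin i → A),
        pC i (fun t => u (e t)) = pC i u)
    (i : ℕ) (u : Fin i → A) :
    actedPolyComp σx Lx cx (actedPolyComp σy Ly cy (fun n (v : Fin n → A) => pC n v)) i u
      - actedPolyComp σy Ly cy (actedPolyComp σx Lx cx (fun n (v : Fin n → A) => pC n v)) i u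
      = actedPolyComp σb Lb cb (fun n (v : Fin n → A) => pC n v) i u := by
  simp only [actedPolyComp, map_sub, map_sum, hσ, hL, hc]
  rw [sum_cons_update (fun v => (pC (i+1)) v) Ly cx u,
      sum_cons_update (fun v => (pC (i+1)) v) Lx cy u]
  rw [pcons_sub (pC (i+1)) (Lx cy) (Ly cx) u]
  rw [swap01 (pC (i+2)) (hpsym (i+2)) cy cx u]
  simp only [Finset.sum_sub_distrib]
  have hd := double_sum_key (pC i) Lx Ly u
  -- turn Lb-sum into difference
  have hLb : (∑ j : Fin i, (pC i) (update u j (Lx (Ly (u j)) - Ly (Lx (u j)))))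
      = (∑ j : Fin i, (pC i) (update u j (Lx (Ly (u j)))))
        - ∑ j : Fin i, (pC i) (update u j (Ly (Lx (u j)))) := by
    rw [← Finset.sum_sub_distrib]
    exact Finset.sum_congr rfl fun j _ => (pC i).map_update_sub u j _ _
  rw [hLb]
  rw [sub_eq_iff_eq_add] at hd
  rw [hd]
  abel

end


/-- The operation `(x, p) ↦ x·p` on polynomials of degree ≤ k on an affine
representation `𝒜` of `L`, valued in a representation `(W, σ)`, is a representation of `L`:
`x·(y·p) − y·(x·p) = [x,y]·p` as functions `𝒜 → W`. -/
theorem action_on_polynomials_is_representation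
    {L : Type*} [LieRing L] [LieAlgebra ℝ L]
    {A : Type*} [AddCommGroup A] [Module ℝ A]
    {𝒜 : Type*} [AddTorsor A 𝒜]
    {W : Type*} [AddCommGroup W] [Module ℝ W]
    (act : L → 𝒜 → A) (lin : L → A →ₗ[ℝ] A)
    (hadd : ∀ (x y : L) (a : 𝒜), act (x + y) a = act x a + act y a)
    (hsmul : ∀ (r : ℝ) (x : L) (a : 𝒜), act (r • x) a = r • act x a)
    (haff : ∀ (x : L) (u : A) (a : 𝒜), act x (u +ᵥ a) = act x a + lin x u)
    (hcoc : ∀ (x y : L) (a : 𝒜), lin x (act y a) - lin y (act x a) - act ⁅x, y⁆ a = 0)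
    (σ : L →ₗ[ℝ] W →ₗ[ℝ] W)
    (hσ : ∀ x y : L, σ ⁅x, y⁆ = σ x ∘ₗ σ y - σ y ∘ₗ σ x)
    (k : ℕ) (a₀ : 𝒜)
    (pC : ∀ i : ℕ, MultilinearMap ℝ (fun _ : Fin i => A) W)
    (hpsym : ∀ (i : ℕ) (e : Equiv.Perm (Fin i)) (u : Fin i → A),
        pC i (fun t => u (e t)) = pC i u)
    (hptrunc : ∀ i : ℕ, k < i → pC i = 0) :
    ∀ (x y : L) (a : 𝒜),
      polyFromComp a₀ k
          (actedPolyComp (σ x) (lin x) (act x a₀)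
            (actedPolyComp (σ y) (lin y) (act y a₀) (fun i (u : Fin i → A) => pC i u))) a
        - polyFromComp a₀ k
            (actedPolyComp (σ y) (lin y) (act y a₀)
              (actedPolyComp (σ x) (lin x) (act x a₀) (fun i (u : Fin i → A) => pC i u))) a
        = polyFromComp a₀ k
            (actedPolyComp (σ ⁅x, y⁆) (lin ⁅x, y⁆) (act ⁅x, y⁆ a₀)
              (fun i (u : Fin i → A) => pC i u)) a := by
  intro x y a
  have hcb : act ⁅x, y⁆ a₀ = lin x (act y a₀) - lin y (act x a₀) :=
    (sub_eq_zero.mp (hcoc x y a₀)).symm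
  have hLb : ∀ v : A, lin ⁅x, y⁆ v = lin x (lin y v) - lin y (lin x v) := by
    intro v
    have h1 := hcoc x y (v +ᵥ a₀)
    rw [haff y v a₀, haff x v a₀, haff ⁅x, y⁆ v a₀, map_add, map_add] at h1
    have e1 := sub_eq_zero.mp h1
    have e0 := sub_eq_zero.mp (hcoc x y a₀)
    have e1' : lin ⁅x, y⁆ v = lin x (act y a₀) + lin x (lin y v)
        - (lin y (act x a₀) + lin y (lin x v)) - act ⁅x, y⁆ a₀ := by
      rw [e1]; abel
    rw [e1', ← e0]
    abel
  have hσb : ∀ w : W, σ ⁅x, y⁆ w = σ x (σ y w) - σ y (σ x w) := by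
    intro w; rw [hσ x y]; simp
  simp only [polyFromComp]
  rw [← Finset.sum_sub_distrib]
  refine Finset.sum_congr rfl fun i _ => ?_
  rw [← smul_sub,
    comp_key (σ x) (σ y) (σ ⁅x, y⁆) (lin x) (lin y) (lin ⁅x, y⁆)
      (act x a₀) (act y a₀) (act ⁅x, y⁆ a₀) hσb hLb hcb pC hpsym i (fun _ => a -ᵥ a₀)]
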